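/- Let N be a countable torsion-free nilpotent group and let Δ ≤ N be a nontrivial boomerang subgroup. Then Δ ∩ Z(N) is nontrivial, where Z(N) is the center of N. -/

import Mathlib

/-- The conjugation action of `γ` on subgroups: `Δ ↦ γ Δ γ⁻¹`. -/
def conjSubgroup {Γ : Type*} [Group Γ] (γ : Γ) (Δ : Subgroup Γ) : Subgroup Γ :=
  Subgroup.map (MulAut.conj γ).toMonoidHom Δ

/-- The Chabauty topology on `Subgroup Γ`: induced from the product of discrete
topologies on `Γ → Prop` via the membership indicator. -/
def chabautyTopology (Γ : Type*) [Group Γ] : TopologicalSpace (Subgroup Γ) :=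
  TopologicalSpace.induced (fun (Δ : Subgroup Γ) (g : Γ) => g ∈ Δ)
    (@Pi.topologicalSpace Γ (fun _ => Prop) (fun _ => ⊥))

/-- `γ` is a recurrent direction for `Δ`: every Chabauty-open neighbourhood `O` of `Δ`
contains `γ^n Δ γ^{-n}` for some `n ≥ 1`. -/
def IsRecurrentDirection {Γ : Type*} [Group Γ] (γ : Γ) (Δ : Subgroup Γ) : Prop :=
  ∀ O : Set (Subgroup Γ), (chabautyTopology Γ).IsOpen O → Δ ∈ O →
    ∃ n : ℕ, 1 ≤ n ∧ conjSubgroup (γ ^ n) Δ ∈ O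

/-- `Δ` is a boomerang subgroup if every `γ` is a recurrent direction for it. -/
def IsBoomerang {Γ : Type*} [Group Γ] (Δ : Subgroup Γ) : Prop :=
  ∀ γ : Γ, IsRecurrentDirection γ Δ

/-- A group has torsion-free center. -/
def CtrTF (G : Type*) [Group G] : Prop :=
  ∀ z : G, z ∈ Subgroup.center G → ∀ m : ℕ, 0 < m → z ^ m = 1 → z = 1

lemma conj_pow_of_central {G : Type*} [Group G] {z y c : G}
    (hc : c ∈ Subgroup.center G) (h : z * y * z⁻¹ = c * y) (m : ℕ) :
    z ^ m * y * (z ^ m)⁻¹ = c ^ m * y := by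
  induction m with
  | zero => simp
  | succ m ih =>
    have step : z ^ (m + 1) * y * (z ^ (m + 1))⁻¹ = z * (z ^ m * y * (z ^ m)⁻¹) * z⁻¹ := by
      rw [pow_succ]; group
    have hcm : z * c ^ m = c ^ m * z :=
      Subgroup.mem_center_iff.mp (pow_mem hc m) z
    rw [step, ih]
    calc z * (c ^ m * y) * z⁻¹ = c ^ m * (z * y * z⁻¹) := by
          rw [← mul_assoc, ← mul_assoc, hcm]; group
      _ = c ^ (m + 1) * y := by rw [h, ← mul_assoc, ← pow_succ]

/-- If the center of `G` is torsion-free, so is the center of `G ⧸ center G`. -/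
lemma ctrTF_quotient_center {G : Type*} [Group G] (h : CtrTF G) :
    CtrTF (G ⧸ Subgroup.center G) := by
  intro zbar hzbar m hm hzm
  obtain ⟨z, rfl⟩ := QuotientGroup.mk_surjective zbar
  rw [QuotientGroup.eq_one_iff, Subgroup.mem_center_iff]
  intro y
  have hc : z * y * z⁻¹ * y⁻¹ ∈ Subgroup.center G := by
    rw [← QuotientGroup.eq_one_iff (z * y * z⁻¹ * y⁻¹)]
    have hyz := Subgroup.mem_center_iff.mp hzbar (QuotientGroup.mk y)
    have hmkeq : (QuotientGroup.mk (z * y * z⁻¹ * y⁻¹) : G ⧸ Subgroup.center G)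
        = (QuotientGroup.mk z) * (QuotientGroup.mk y) * (QuotientGroup.mk z)⁻¹
          * (QuotientGroup.mk y)⁻¹ := by
      simp
    rw [hmkeq, ← hyz]
    group
  have hzmc : z ^ m ∈ Subgroup.center G := by
    rw [← QuotientGroup.eq_one_iff (z ^ m)]
    simpa using hzm
  set c := z * y * z⁻¹ * y⁻¹ with hcdef
  have h1 : z * y * z⁻¹ = c * y := by rw [hcdef]; group
  have h2 := conj_pow_of_central hc h1 m
  have h3 : z ^ m * y * (z ^ m)⁻¹ = y := by
    have := Subgroup.mem_center_iff.mp hzmc y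
    rw [← this]; group
  have hcm1 : c ^ m = 1 := by
    have : c ^ m * y = y := by rw [← h2, h3]
    exact mul_right_cancel (by rw [this, one_mul])
  have hc1 : c = 1 := h c hc m hm hcm1
  have : z * y * z⁻¹ * y⁻¹ = 1 := hc1
  calc y * z = (z * y * z⁻¹ * y⁻¹) * (y * z) := by rw [this, one_mul]
    _ = z * y := by group

/-- Unique roots in nilpotent groups with torsion-free center. -/
lemma uniqueRoots_aux : ∀ (c : ℕ) (G : Type _) [Group G] [Group.IsNilpotent G],
    Group.nilpotencyClass G ≤ c → CtrTF G →
    ∀ a b : G, ∀ n : ℕ, 0 < n → a ^ n = b ^ n → a = b := by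
  intro c
  induction c with
  | zero =>
    intro G _ _ hc _ a b n hn hab
    haveI := nilpotencyClass_zero_iff_subsingleton.mp (Nat.le_zero.mp hc)
    exact Subsingleton.elim a b
  | succ c ih =>
    intro G _ _ hc h a b n hn hab
    have hq : Group.nilpotencyClass (G ⧸ Subgroup.center G) ≤ c := by
      rw [nilpotencyClass_quotient_center]; omega
    have hmk : (QuotientGroup.mk a : G ⧸ Subgroup.center G) = QuotientGroup.mk b := by
      refine ih (G ⧸ Subgroup.center G) hq (ctrTF_quotient_center h) _ _ n hn ?_
      have : (QuotientGroup.mk (a ^ n) : G ⧸ Subgroup.center G) = QuotientGroup.mk (b ^ n) := by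
        rw [hab]
      simpa using this
    have hz : a⁻¹ * b ∈ Subgroup.center G := by
      rw [← QuotientGroup.eq_one_iff (a⁻¹ * b)]
      simp [hmk]
    set z := a⁻¹ * b with hzdef
    have hb : b = a * z := by rw [hzdef]; group
    have hcom : Commute a z := (Subgroup.mem_center_iff.mp hz a)
    have : a ^ n * z ^ n = a ^ n := by
      rw [← hcom.mul_pow, ← hb, ← hab]
    have hzn : z ^ n = 1 := by
      exact mul_left_cancel (by rw [this, mul_one])
    have : z = 1 := h z hz n hn hzn
    rw [hb, this, mul_one]

lemma commute_of_pow_commute {G : Type _} [Group G] [Group.IsNilpotent G] (h : CtrTF G)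
    {γ δ : G} {n : ℕ} (hn : 0 < n) (hcomm : γ ^ n * δ = δ * γ ^ n) : γ * δ = δ * γ := by
  have key : (δ * γ * δ⁻¹) ^ n = γ ^ n := by
    have : (δ * γ * δ⁻¹) ^ n = δ * γ ^ n * δ⁻¹ := by
      rw [← MulAut.conj_apply, ← map_pow, MulAut.conj_apply]
    rw [this, ← hcomm]
    group
  have := uniqueRoots_aux (Group.nilpotencyClass G) G le_rfl h (δ * γ * δ⁻¹) γ n hn key
  calc γ * δ = (δ * γ * δ⁻¹) * δ := by rw [this]
    _ = δ * γ := by group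

theorem boomerang_meets_center_of_nilpotent {N : Type*} [Group N] [Countable N]
    (htf : ∀ g : N, g ≠ 1 → ¬IsOfFinOrder g) [Group.IsNilpotent N]
    (Δ : Subgroup N) (hΔ : IsBoomerang Δ) (hne : Δ ≠ ⊥) :
    Δ ⊓ Subgroup.center N ≠ ⊥ := by
  classical
  have hC : CtrTF N := by
    intro z _ m hm hzm
    by_contra hz
    exact htf z hz (isOfFinOrder_iff_pow_eq_one.mpr ⟨m, hm, hzm⟩)
  obtain ⟨c, hcc⟩ := (‹Group.IsNilpotent N›).nilpotent
  have hex : ∃ i, Δ ⊓ upperCentralSeries N i ≠ ⊥ :=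
    ⟨c, by rw [show upperCentralSeries N c = ⊤ from hcc, inf_top_eq]; exact hne⟩
  set i := Nat.find hex with hidef
  have hi : Δ ⊓ upperCentralSeries N i ≠ ⊥ := Nat.find_spec hex
  have hmin : ∀ j < i, Δ ⊓ upperCentralSeries N j = ⊥ := by
    intro j hj
    by_contra hj'
    exact absurd hj' (Nat.find_min hex hj)
  have hi1 : 1 ≤ i := by
    by_contra hlt
    apply hi
    have : i = 0 := by omega
    rw [this, show upperCentralSeries N 0 = ⊥ from rfl, inf_bot_eq]
  intro hbot
  obtain ⟨j, hij⟩ : ∃ j, i = j + 1 := ⟨i - 1, by omega⟩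
  -- pick a nontrivial element δ of Δ ⊓ Z_i
  obtain ⟨⟨δ, hδmem⟩, hδ1⟩ := Subgroup.ne_bot_iff_exists_ne_one.mp hi
  have hδ1 : δ ≠ 1 := by
    simpa [Subtype.ext_iff] using hδ1
  have hδΔ : δ ∈ Δ := hδmem.1
  have hδZ : δ ∈ upperCentralSeries N i := hδmem.2
  -- δ is not central
  have hδnc : δ ∉ Subgroup.center N := by
    intro hcen
    apply hδ1
    have : δ ∈ Δ ⊓ Subgroup.center N := ⟨hδΔ, hcen⟩
    rw [hbot] at this
    exact this
  obtain ⟨γ, hγ⟩ : ∃ γ : N, ¬ (γ * δ = δ * γ) := by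
    by_contra hall
    push_neg at hall
    exact hδnc (Subgroup.mem_center_iff.mpr hall)
  -- the Chabauty-open set {H | δ ∈ H}
  have hO : (chabautyTopology N).IsOpen {H : Subgroup N | δ ∈ H} := by
    refine ⟨(fun f : N → Prop => f δ) ⁻¹' {p : Prop | p}, ?_, rfl⟩
    have hco : @Continuous (N → Prop) Prop
        (@Pi.topologicalSpace N (fun _ => Prop) (fun _ => ⊥)) ⊥
        (fun f : N → Prop => f δ) :=
      @continuous_apply N (fun _ => Prop) (fun _ => ⊥) δ
    exact @Continuous.isOpen_preimage (N → Prop) Prop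
      (@Pi.topologicalSpace N (fun _ => Prop) (fun _ => ⊥)) ⊥
      (fun f : N → Prop => f δ) hco {p : Prop | p}
      (@isOpen_discrete Prop ⊥ (@DiscreteTopology.mk Prop ⊥ rfl) _)
  obtain ⟨n, hn1, hnmem⟩ := hΔ γ _ hO hδΔ
  -- extract d ∈ Δ with γ^n d γ^{-n} = δ
  obtain ⟨d, hdΔ, hdeq⟩ := hnmem
  simp only [MulEquiv.coe_toMonoidHom, MulAut.conj_apply] at hdeq
  have hdval : d = (γ ^ n)⁻¹ * δ * γ ^ n := by
    rw [← hdeq]; group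
  set e := δ⁻¹ * d with hedef
  have heΔ : e ∈ Δ := mul_mem (inv_mem hδΔ) hdΔ
  have heZ : e ∈ upperCentralSeries N j := by
    have hδZ' : δ⁻¹ ∈ upperCentralSeries N (j + 1) := by
      rw [← hij]; exact inv_mem hδZ
    have := mem_upperCentralSeries_succ_iff.mp hδZ' ((γ ^ n)⁻¹)
    have heq : e = δ⁻¹ * (γ ^ n)⁻¹ * (δ⁻¹)⁻¹ * ((γ ^ n)⁻¹)⁻¹ := by
      rw [hedef, hdval]; group
    rw [heq]
    exact this
  have he1 : e ≠ 1 := by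
    intro he
    apply hγ
    have hδd : d = δ := by
      have : δ * e = δ * 1 := by rw [he]
      simpa [hedef, mul_assoc] using this
    have hcomm : γ ^ n * δ = δ * γ ^ n := by
      have : γ ^ n * d * (γ ^ n)⁻¹ = δ := hdeq
      rw [hδd] at this
      calc γ ^ n * δ = (γ ^ n * δ * (γ ^ n)⁻¹) * γ ^ n := by group
        _ = δ * γ ^ n := by rw [this]
    exact commute_of_pow_commute hC hn1 hcomm
  apply he1
  have : e ∈ Δ ⊓ upperCentralSeries N j := ⟨heΔ, heZ⟩
  rw [hmin j (by omega)] at this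
  exact this
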